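/- Let μ₁, μ₂, b, a be positive reals with a > μ₁·μ₂ + b, and set α₀ := ln(a/(μ₁·μ₂ + b)). Suppose ε₀ > 0 and μ, ν : [0, ε₀) → ℝ are differentiable at 0 with μ(0) = α₀ and ν(0) = π, and satisfy ε·ν(ε)·(2ε·μ(ε) + μ₁ + μ₂) − a·e^{−μ(ε)}·sin(ν(ε)) = 0 for all ε ∈ [0, ε₀). Then ν′(0) = −π·(μ₁ + μ₂)/(μ₁·μ₂ + b) < 0; in particular ν(ε) < π for all sufficiently small ε > 0. -/

import Mathlib

open Filter Set

/-- Along a branch λ(ε) = μ(ε)+iν(ε) of roots of the rescaled characteristic equation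
with μ(0) = α₀, ν(0) = π, one has ν'(0) = -π(μ₁+μ₂)/(μ₁μ₂+b) < 0, so ν(ε) < π for all
sufficiently small ε > 0. -/
theorem branch_derivative_negative
    (μ1 μ2 b a : ℝ) (hμ1 : 0 < μ1) (hμ2 : 0 < μ2) (hb : 0 < b) (ha : 0 < a)
    (hgt : μ1 * μ2 + b < a)
    (ε0 : ℝ) (hε0 : 0 < ε0) (μ ν : ℝ → ℝ)
    (hμ0 : μ 0 = Real.log (a / (μ1 * μ2 + b))) (hν0 : ν 0 = Real.pi)
    (μ'0 ν'0 : ℝ)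
    (hμd : HasDerivWithinAt μ μ'0 (Set.Ici 0) 0)
    (hνd : HasDerivWithinAt ν ν'0 (Set.Ici 0) 0)
    (heq : ∀ ε : ℝ, 0 ≤ ε → ε < ε0 →
      ε * ν ε * (2 * ε * μ ε + μ1 + μ2) - a * Real.exp (-(μ ε)) * Real.sin (ν ε) = 0) :
    ν'0 = -(Real.pi * (μ1 + μ2)) / (μ1 * μ2 + b) ∧ ν'0 < 0 ∧
    ∀ᶠ ε in nhdsWithin 0 (Set.Ioi 0), ν ε < Real.pi := by
  set c : ℝ := μ1 * μ2 + b with hc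
  have hcpos : 0 < c := by positivity
  have hexp : a * Real.exp (-(μ 0)) = c := by
    rw [hμ0, Real.exp_neg, Real.exp_log (by positivity)]
    field_simp
  have h1 : HasDerivWithinAt (fun ε : ℝ => ε * ν ε) (1 * ν 0 + 0 * ν'0) (Set.Ici 0) 0 := by
    exact (hasDerivWithinAt_id (0:ℝ) (Set.Ici 0)).mul hνd
  have h2 : HasDerivWithinAt (fun ε : ℝ => 2 * ε * μ ε + μ1 + μ2)
      ((2 * 1) * μ 0 + (2 * 0) * μ'0) (Set.Ici 0) 0 := by
    have := (((hasDerivWithinAt_id (0:ℝ) (Set.Ici 0)).const_mul 2).mul hμd)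
    simpa [mul_assoc] using (this.add_const μ1).add_const μ2
  have hg := h1.mul h2
  have hh := ((hμd.neg.exp.const_mul a).mul hνd.sin)
  have hF := hg.sub hh
  have hev : (fun ε : ℝ => ε * ν ε * (2 * ε * μ ε + μ1 + μ2)
      - a * Real.exp (-(μ ε)) * Real.sin (ν ε)) =ᶠ[nhdsWithin 0 (Set.Ici 0)] (fun _ => 0) := by
    filter_upwards [self_mem_nhdsWithin,
      mem_nhdsWithin_of_mem_nhds (Iio_mem_nhds hε0)] with x hx hx'
    exact heq x hx hx'
  have hF0 : HasDerivWithinAt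
      (fun ε : ℝ => ε * ν ε * (2 * ε * μ ε + μ1 + μ2) - a * Real.exp (-(μ ε)) * Real.sin (ν ε))
      0 (Set.Ici 0) 0 :=
    (hasDerivWithinAt_const (0:ℝ) (Set.Ici 0) (0:ℝ)).congr_of_eventuallyEq hev
      (heq 0 le_rfl hε0)
  have hu : UniqueDiffWithinAt ℝ (Set.Ici (0:ℝ)) 0 := uniqueDiffOn_Ici 0 0 (show (0:ℝ) ∈ Set.Ici 0 from Set.mem_Ici.mpr (le_refl 0))
  have hD : (1 * ν 0 + 0 * ν'0) * (2 * 0 * μ 0 + μ1 + μ2)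
      + 0 * ν 0 * ((2 * 1) * μ 0 + (2 * 0) * μ'0)
      - (a * (Real.exp (-(μ 0)) * -μ'0) * Real.sin (ν 0)
        + a * Real.exp (-(μ 0)) * (Real.cos (ν 0) * ν'0)) = 0 := by
    exact (hF.derivWithin hu).symm.trans (hF0.derivWithin hu)
  have hkey : Real.pi * (μ1 + μ2) + c * ν'0 = 0 := by
    rw [hν0] at hD
    simp [Real.sin_pi, Real.cos_pi] at hD
    have hD' : Real.pi * (μ1 + μ2) + (a * Real.exp (-(μ 0))) * ν'0 = 0 := by linarith
    rw [hexp] at hD'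
    exact hD'
  have h1' : ν'0 = -(Real.pi * (μ1 + μ2)) / c := by
    field_simp
    linarith
  have h2' : ν'0 < 0 := by
    rw [h1']
    have : 0 < Real.pi * (μ1 + μ2) := by positivity
    exact div_neg_of_neg_of_pos (by linarith) hcpos
  refine ⟨h1', h2', ?_⟩
  have hslope := hasDerivWithinAt_iff_tendsto_slope.mp hνd
  have hsub : Set.Ioi (0:ℝ) ⊆ Set.Ici 0 \ {0} := fun x hx => ⟨Set.mem_Ici.mpr (le_of_lt (Set.mem_Ioi.mp hx)), ne_of_gt (Set.mem_Ioi.mp hx)⟩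
  have hslope' : Tendsto (slope ν 0) (nhdsWithin 0 (Set.Ioi 0)) (nhds ν'0) :=
    hslope.mono_left (nhdsWithin_mono _ hsub)
  have hev2 : ∀ᶠ ε in nhdsWithin 0 (Set.Ioi 0), slope ν 0 ε < 0 :=
    hslope'.eventually_lt_const h2'
  filter_upwards [hev2, self_mem_nhdsWithin] with ε hε hε'
  have : (ν ε - ν 0) / ε < 0 := by simpa [slope_def_field] using hε
  have := (div_neg_iff).mp this
  rcases this with ⟨h, h'⟩ | ⟨h, h'⟩
  · exact absurd h' (not_lt.mpr (le_of_lt hε'))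
  · rw [hν0] at h; linarith
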